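/- Let G be a finite group and P a subgroup. Let Q be a subgroup of P×P such that the two canonical projections P×P → P both map Q onto P. Then: (i) if (x,y) ∈ G×G satisfies (x,y)Q(x,y)^{-1} ≤ P×P, then (x,y) ∈ N_G(P)×N_G(P); (ii) N_{G×G}(Q) ≤ N_G(P)×N_G(P) = N_{G×G}(P×P). -/

import Mathlib

/-- Let `G` be a finite group and `P` a subgroup.  Let `Q` be a subgroup of
`P × P` such that the two canonical projections `P × P → P` both map `Q` onto `P`.  Then:
(i) if `(x,y) ∈ G × G` satisfies `(x,y)Q(x,y)⁻¹ ≤ P × P`, then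
`(x,y) ∈ N_G(P) × N_G(P)`; (ii) `N_{G×G}(Q) ≤ N_G(P) × N_G(P) = N_{G×G}(P × P)`. -/
theorem green_correspondence_normaliser_condition
    {G : Type*} [Group G] [Finite G] (P : Subgroup G) (Q : Subgroup (G × G))
    (hQle : Q ≤ P.prod P)
    (hfst : Q.map (MonoidHom.fst G G) = P)
    (hsnd : Q.map (MonoidHom.snd G G) = P) :
    (∀ x y : G,
        Subgroup.map (MulAut.conj ((x, y) : G × G)).toMonoidHom Q ≤ P.prod P →
          x ∈ Subgroup.normalizer (P : Set G) ∧ y ∈ Subgroup.normalizer (P : Set G)) ∧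
    Subgroup.normalizer (Q : Set (G × G)) ≤
      (Subgroup.normalizer (P : Set G)).prod (Subgroup.normalizer (P : Set G)) ∧
    (Subgroup.normalizer (P : Set G)).prod (Subgroup.normalizer (P : Set G)) =
      Subgroup.normalizer ((P.prod P : Subgroup (G × G)) : Set (G × G)) := by
  have key : ∀ x y : G,
      Subgroup.map (MulAut.conj ((x, y) : G × G)).toMonoidHom Q ≤ P.prod P →
        x ∈ Subgroup.normalizer (P : Set G) ∧ y ∈ Subgroup.normalizer (P : Set G) := by
    intro x y h
    constructor
    · apply Subgroup.mem_normalizer_fintype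
      intro n hn
      rw [← hfst] at hn
      obtain ⟨q, hq, hq1⟩ := hn
      subst hq1
      have := h ⟨q, hq, rfl⟩
      simpa [Subgroup.mem_prod] using this.1
    · apply Subgroup.mem_normalizer_fintype
      intro n hn
      rw [← hsnd] at hn
      obtain ⟨q, hq, hq1⟩ := hn
      subst hq1
      have := h ⟨q, hq, rfl⟩
      simpa [Subgroup.mem_prod] using this.2
  refine ⟨key, ?_, ?_⟩
  · rintro ⟨x, y⟩ hxy
    rw [Subgroup.mem_normalizer_iff] at hxy
    have h : Subgroup.map (MulAut.conj ((x, y) : G × G)).toMonoidHom Q ≤ P.prod P := by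
      rintro g ⟨q, hq, rfl⟩
      exact hQle ((hxy q).mp hq)
    exact key x y h
  · ext ⟨x, y⟩
    simp only [Subgroup.mem_prod, Subgroup.mem_normalizer_iff]
    constructor
    · rintro ⟨hx, hy⟩ ⟨a, b⟩
      simp only [Subgroup.mem_prod, Prod.mul_def, Prod.fst_inv, Prod.snd_inv]
      rw [hx a, hy b]
    · intro h
      constructor
      · intro a
        have := h (a, 1)
        simpa [Subgroup.mem_prod, Prod.mul_def, one_mem] using this
      · intro b
        have := h (1, b)
        simpa [Subgroup.mem_prod, Prod.mul_def, one_mem] using this
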